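/- Let A be a real I × K matrix, y ∈ ℝ^I, and δ a real number such that ‖y − P y‖ ≤ δ < ‖y‖, where P y is the orthogonal projection of y onto the column space of A (the range of the linear map x ↦ A·x) and ‖·‖ is the Euclidean norm. Then there exists x* ∈ ℝ^K with x* ≠ 0, ‖y − A·x*‖ ≤ δ, and ‖x*‖ ≤ ‖x‖ for every x ∈ ℝ^K satisfying ‖y − A·x‖ ≤ δ. -/

import Mathlib

/-- 'Range of the bound δ' lemma of the paper: if
`‖y - P y‖ ≤ δ < ‖y‖`, where `P` is the orthogonal projection onto the column space
of `A` (the range of `x ↦ A x`), then the bounded regression problem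
`min ‖x‖ s.t. ‖y - A x‖ ≤ δ` admits a nonzero minimum-norm solution. -/
theorem bounded_regression_nonzero_minimiser (I K : ℕ)
    (A : Matrix (Fin I) (Fin K) ℝ) (y : EuclideanSpace ℝ (Fin I)) (δ : ℝ)
    (hlow : ‖y - (Submodule.orthogonalProjectionOnto (LinearMap.range (Matrix.toEuclideanLin A)) y :
        EuclideanSpace ℝ (Fin I))‖ ≤ δ)
    (hupp : δ < ‖y‖) :
    ∃ xstar : EuclideanSpace ℝ (Fin K), xstar ≠ 0 ∧
      ‖y - Matrix.toEuclideanLin A xstar‖ ≤ δ ∧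
      ∀ x : EuclideanSpace ℝ (Fin K),
        ‖y - Matrix.toEuclideanLin A x‖ ≤ δ → ‖xstar‖ ≤ ‖x‖ := by
  set L := Matrix.toEuclideanLin A
  have hLcont : Continuous fun x : EuclideanSpace ℝ (Fin K) => L x :=
    L.continuous_of_finiteDimensional
  -- a feasible point
  obtain ⟨x0, hx0⟩ : ∃ x0, L x0 =
      (Submodule.orthogonalProjectionOnto (LinearMap.range L) y : EuclideanSpace ℝ (Fin I)) := by
    exact (Submodule.orthogonalProjectionOnto (LinearMap.range L) y).2
  have hx0feas : ‖y - L x0‖ ≤ δ := by rw [hx0]; exact hlow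
  -- feasible set
  set S : Set (EuclideanSpace ℝ (Fin K)) := {x | ‖y - L x‖ ≤ δ}
  have hScl : IsClosed S := by
    have : Continuous fun x : EuclideanSpace ℝ (Fin K) => ‖y - L x‖ :=
      (continuous_const.sub hLcont).norm
    exact isClosed_le this continuous_const
  set T : Set (EuclideanSpace ℝ (Fin K)) := S ∩ Metric.closedBall 0 ‖x0‖
  have hTne : T.Nonempty := ⟨x0, hx0feas, by simp⟩
  have hTcomp : IsCompact T :=
    ((isCompact_closedBall (0 : EuclideanSpace ℝ (Fin K)) ‖x0‖).inter_left hScl)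
  obtain ⟨xstar, hxstarT, hmin⟩ :=
    hTcomp.exists_isMinOn hTne continuous_norm.continuousOn
  refine ⟨xstar, ?_, hxstarT.1, ?_⟩
  · rintro rfl
    have : ‖y - L 0‖ ≤ δ := hxstarT.1
    simp only [map_zero, sub_zero] at this
    exact absurd this (not_le.mpr hupp)
  · intro x hx
    by_cases h : ‖x‖ ≤ ‖x0‖
    · exact hmin ⟨hx, by simpa [Metric.mem_closedBall] using h⟩
    · have h1 : ‖xstar‖ ≤ ‖x0‖ := hmin ⟨hx0feas, by simp⟩
      linarith [not_le.mp h]
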